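/- Suppose g : [0,∞) → [0,∞) is differentiable and satisfies g'(t) ≤ γ(t)g(t) + α(t)g(t)^p + β(t) for all t ≥ 0, where p > 1, α, β ≥ 0, M₁ := sup_{t≥0} ∫₀ᵗ γ + ε^{p-1}∫₀^∞ α < ∞ for a given ε > 0. Define μ(t) = exp(−∫₀ᵗ (γ(ξ) + ε^{p-1}α(ξ)) dξ). If g(0)·e^{M₁} < ε/3 and ∫₀ᵗ β(ξ)μ(ξ)dξ / μ(t) < ε/3 for all t ≥ 0, then g(t) ≤ ε for all t ≥ 0. -/

import Mathlib

open MeasureTheory intervalIntegral Real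

section GronwallAux

open Set Filter Topology

lemma gronwall_aux (c β g : ℝ → ℝ) (T : ℝ) (hT : 0 ≤ T)
    (hc : LocallyIntegrable c) (hβ : LocallyIntegrable β) (hβ0 : ∀ t, 0 ≤ β t)
    (hgdiff : Differentiable ℝ g)
    (hineq : ∀ x ∈ Set.Ioo 0 T, deriv g x ≤ c x * g x + β x)
    (hgT : 0 ≤ g T) :
    Real.exp (-(∫ s in (0:ℝ)..T, c s)) * g T ≤
      g 0 + ∫ t in (0:ℝ)..T, β t * Real.exp (-(∫ s in (0:ℝ)..t, c s)) := by
  have hgc : Continuous g := hgdiff.continuous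
  have hcI : ∀ a b : ℝ, IntervalIntegrable c volume a b := fun a b =>
    (hc.integrableOn_isCompact isCompact_uIcc).intervalIntegrable
  have hβI : ∀ a b : ℝ, IntervalIntegrable β volume a b := fun a b =>
    (hβ.integrableOn_isCompact isCompact_uIcc).intervalIntegrable
  set C : ℝ → ℝ := fun t => ∫ s in (0:ℝ)..t, c s with hC
  set ν : ℝ → ℝ := fun t => Real.exp (-(C t)) with hν
  have hCcont : Continuous C := continuous_primitive hcI 0
  have hνcont : Continuous ν := (hCcont.neg).rexp
  -- bound for g
  obtain ⟨B, hB⟩ := (isCompact_Icc (a := (0:ℝ)) (b := T)).exists_bound_of_continuousOn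
    hgc.continuousOn
  have hB0 : 0 ≤ B := le_trans (norm_nonneg _) (hB 0 (by constructor <;> simp [hT]))
  -- bound for ν
  obtain ⟨M, hM⟩ := (isCompact_Icc (a := (0:ℝ)) (b := T)).exists_bound_of_continuousOn
    hνcont.continuousOn
  have hM' : ∀ x ∈ Icc (0:ℝ) T, ν x ≤ M := fun x hx => le_trans (le_abs_self _) (hM x hx)
  have hM0 : 0 ≤ M := le_trans (norm_nonneg _) (hM 0 (by constructor <;> simp [hT]))
  set I : ℝ := ∫ t in (0:ℝ)..T, β t * ν t with hI
  have hβνI : ∀ a b : ℝ, IntervalIntegrable (fun t => β t * ν t) volume a b := fun a b =>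
    (hβI a b).mul_continuousOn hνcont.continuousOn
  have key : ∀ δ : ℝ, 0 < δ →
      ν T * g T ≤ Real.exp δ * (g 0 + Real.exp δ * (M * B * δ + I)) := by
    intro δ hδ
    have hexpδ : (0:ℝ) < Real.exp δ := Real.exp_pos δ
    set c1 : ℝ → ℝ := (Set.Icc (0:ℝ) T).indicator c with hc1def
    have hc1 : Integrable c1 volume :=
      (hc.integrableOn_isCompact isCompact_Icc).integrable_indicator measurableSet_Icc
    obtain ⟨h, hhsupp, hhL1, hhcont, hhint⟩ := hc1.exists_hasCompactSupport_integral_sub_le hδ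
    set Ch : ℝ → ℝ := fun t => ∫ s in (0:ℝ)..t, h s with hChdef
    have hCh : ∀ t, HasDerivAt Ch (h t) t := fun t => (hhcont.integral_hasStrictDerivAt 0 t).hasDerivAt
    set νh : ℝ → ℝ := fun t => Real.exp (-(Ch t)) with hνhdef
    have hνh : ∀ t, HasDerivAt νh (Real.exp (-(Ch t)) * (-(h t))) t := fun t => ((hCh t).neg).exp
    have hνhpos : ∀ t, 0 < νh t := fun t => Real.exp_pos _
    have hνhcont : Continuous νh := by
      rw [hνhdef]
      exact ((continuous_primitive (fun a b => hhcont.intervalIntegrable a b) 0).neg).rexp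
    -- L¹ bound on [0, x]
    have hL1' : ∀ x ∈ Icc (0:ℝ) T, (∫ s in (0:ℝ)..x, |c s - h s|) ≤ δ := by
      intro x hx
      rw [intervalIntegral.integral_of_le hx.1]
      have heq : ∫ s in Ioc (0:ℝ) x, |c s - h s| = ∫ s in Ioc (0:ℝ) x, ‖c1 s - h s‖ := by
        refine setIntegral_congr_fun measurableSet_Ioc (fun s hs => ?_)
        rw [Real.norm_eq_abs, hc1def, Set.indicator_of_mem (Set.mem_Icc.2 ⟨hs.1.le, hs.2.trans hx.2⟩)]
      rw [heq]
      calc ∫ s in Ioc (0:ℝ) x, ‖c1 s - h s‖ ≤ ∫ s, ‖c1 s - h s‖ :=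
            setIntegral_le_integral (hc1.sub hhint).norm
              (Filter.Eventually.of_forall fun s => norm_nonneg _)
        _ ≤ δ := hhL1
    -- primitive comparison
    have hCC : ∀ x ∈ Icc (0:ℝ) T, |Ch x - C x| ≤ δ := by
      intro x hx
      have h1 : Ch x - C x = ∫ s in (0:ℝ)..x, (h s - c s) := by
        rw [hChdef, hC, intervalIntegral.integral_sub (hhcont.intervalIntegrable 0 x) (hcI 0 x)]
      rw [h1]
      calc |∫ s in (0:ℝ)..x, (h s - c s)| ≤ ∫ s in (0:ℝ)..x, |h s - c s| :=
            intervalIntegral.abs_integral_le_integral_abs hx.1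
        _ = ∫ s in (0:ℝ)..x, |c s - h s| := by simp_rw [abs_sub_comm]
        _ ≤ δ := hL1' x hx
    have hcomp1 : ∀ x ∈ Icc (0:ℝ) T, νh x ≤ Real.exp δ * ν x := by
      intro x hx
      have := hCC x hx
      rw [hν]
      rw [← Real.exp_add]
      apply Real.exp_le_exp.2
      have := abs_le.1 (hCC x hx)
      linarith [this.1, this.2]
    have hcomp2 : ∀ x ∈ Icc (0:ℝ) T, ν x ≤ Real.exp δ * νh x := by
      intro x hx
      rw [hν]
      show Real.exp (-(C x)) ≤ Real.exp δ * Real.exp (-(Ch x))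
      rw [← Real.exp_add]
      apply Real.exp_le_exp.2
      have := abs_le.1 (hCC x hx)
      linarith [this.1, this.2]
    -- the function F and its derivative
    set F : ℝ → ℝ := fun t => νh t * g t with hFdef
    set F' : ℝ → ℝ := fun t => Real.exp (-(Ch t)) * (-(h t)) * g t + νh t * deriv g t with hF'def
    have hF' : ∀ t, HasDerivAt F (F' t) t := fun t => (hνh t).mul (hgdiff t).hasDerivAt
    set φ : ℝ → ℝ := fun x => νh x * (g x * (c x - h x) + β x) with hφdef
    have hφint : IntegrableOn φ (Icc (0:ℝ) T) volume := by
      apply IntegrableOn.continuousOn_mul hνhcont.continuousOn _ isCompact_Icc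
      exact (IntegrableOn.continuousOn_mul hgc.continuousOn
        ((hc.integrableOn_isCompact isCompact_Icc).sub hhint.integrableOn) isCompact_Icc).add
        (hβ.integrableOn_isCompact isCompact_Icc)
    have hbound : ∀ x ∈ Ioo (0:ℝ) T, F' x ≤ φ x := by
      intro x hx
      have h1 := hineq x hx
      have h2 := (hνhpos x).le
      have h3 : νh x * deriv g x ≤ νh x * (c x * g x + β x) := mul_le_mul_of_nonneg_left h1 h2
      have h4 : Real.exp (-(Ch x)) = νh x := rfl
      rw [hF'def, hφdef]
      simp only [h4]
      nlinarith [h3]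
    have hFTC : F T - F 0 ≤ ∫ y in (0:ℝ)..T, φ y :=
      sub_le_integral_of_hasDeriv_right_of_le hT (hνhcont.mul hgc).continuousOn
        (fun x hx => (hF' x).hasDerivWithinAt) hφint hbound
    have hF0 : F 0 = g 0 := by
      rw [hFdef]
      simp [hνhdef, hChdef, intervalIntegral.integral_same]
    -- bound the integral of φ
    have hφIval : ∀ x ∈ Icc (0:ℝ) T,
        φ x ≤ Real.exp δ * M * B * |c x - h x| + Real.exp δ * (β x * ν x) := by
      intro x hx
      have hν1 := hcomp1 x hx
      have hνM := hM' x hx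
      have hgB : |g x| ≤ B := by rw [← Real.norm_eq_abs]; exact hB x hx
      have hνx : (0:ℝ) < ν x := by rw [hν]; exact Real.exp_pos _
      have hg1 : g x * (c x - h x) ≤ B * |c x - h x| := by
        calc g x * (c x - h x) ≤ |g x * (c x - h x)| := le_abs_self _
          _ = |g x| * |c x - h x| := abs_mul _ _
          _ ≤ B * |c x - h x| := mul_le_mul_of_nonneg_right hgB (abs_nonneg _)
      have h2 := (hνhpos x).le
      rw [hφdef]
      have step1 : νh x * (g x * (c x - h x) + β x) ≤ νh x * (B * |c x - h x| + β x) :=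
        mul_le_mul_of_nonneg_left (by linarith) h2
      have step2 : νh x * (B * |c x - h x| + β x) =
          νh x * (B * |c x - h x|) + νh x * β x := by ring
      have step3 : νh x * (B * |c x - h x|) ≤ (Real.exp δ * M) * (B * |c x - h x|) := by
        apply mul_le_mul_of_nonneg_right _ (by positivity)
        calc νh x ≤ Real.exp δ * ν x := hν1
          _ ≤ Real.exp δ * M := mul_le_mul_of_nonneg_left hνM hexpδ.le
      have step4 : νh x * β x ≤ (Real.exp δ * ν x) * β x :=
        mul_le_mul_of_nonneg_right hν1 (hβ0 x)
      calc νh x * (g x * (c x - h x) + β x) ≤ νh x * (B * |c x - h x|) + νh x * β x := by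
            rw [← step2]; exact step1
        _ ≤ (Real.exp δ * M) * (B * |c x - h x|) + (Real.exp δ * ν x) * β x := by
            exact add_le_add step3 step4
        _ = Real.exp δ * M * B * |c x - h x| + Real.exp δ * (β x * ν x) := by ring
    have hφII : IntervalIntegrable φ volume 0 T := by
      have := hφint
      rw [← uIcc_of_le hT] at this
      exact this.intervalIntegrable
    have hrhsII : IntervalIntegrable
        (fun x => Real.exp δ * M * B * |c x - h x| + Real.exp δ * (β x * ν x)) volume 0 T := by
      apply IntervalIntegrable.add
      · exact (((hcI 0 T).sub (hhcont.intervalIntegrable 0 T)).abs).const_mul _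
      · exact (hβνI 0 T).const_mul _
    have hint1 : (∫ y in (0:ℝ)..T, φ y) ≤
        ∫ y in (0:ℝ)..T, (Real.exp δ * M * B * |c y - h y| + Real.exp δ * (β y * ν y)) :=
      intervalIntegral.integral_mono_on hT hφII hrhsII hφIval
    have hint2 : (∫ y in (0:ℝ)..T, (Real.exp δ * M * B * |c y - h y| + Real.exp δ * (β y * ν y)))
        = Real.exp δ * M * B * (∫ y in (0:ℝ)..T, |c y - h y|) + Real.exp δ * I := by
      rw [intervalIntegral.integral_add ((((hcI 0 T).sub (hhcont.intervalIntegrable 0 T)).abs).const_mul _)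
        ((hβνI 0 T).const_mul _), intervalIntegral.integral_const_mul,
        intervalIntegral.integral_const_mul, hI]
    have hch : (∫ y in (0:ℝ)..T, |c y - h y|) ≤ δ := hL1' T ⟨hT, le_refl T⟩ |>.trans_eq rfl
    have habs0 : 0 ≤ ∫ y in (0:ℝ)..T, |c y - h y| :=
      intervalIntegral.integral_nonneg hT (fun x _ => abs_nonneg _)
    have hkey1 : νh T * g T ≤ g 0 + Real.exp δ * (M * B * δ + I) := by
      have : F T - F 0 ≤ Real.exp δ * M * B * δ + Real.exp δ * I := by
        refine le_trans hFTC (le_trans hint1 ?_)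
        rw [hint2]
        have : Real.exp δ * M * B * (∫ y in (0:ℝ)..T, |c y - h y|) ≤ Real.exp δ * M * B * δ :=
          mul_le_mul_of_nonneg_left hch (by positivity)
        linarith
      rw [hF0] at this
      have hFT : F T = νh T * g T := rfl
      rw [hFT] at this
      nlinarith
    -- conclude
    have hνT : ν T ≤ Real.exp δ * νh T := hcomp2 T ⟨hT, le_refl T⟩
    calc ν T * g T ≤ (Real.exp δ * νh T) * g T := mul_le_mul_of_nonneg_right hνT hgT
      _ = Real.exp δ * (νh T * g T) := by ring
      _ ≤ Real.exp δ * (g 0 + Real.exp δ * (M * B * δ + I)) :=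
          mul_le_mul_of_nonneg_left hkey1 hexpδ.le
  have htend : Tendsto (fun δ : ℝ => Real.exp δ * (g 0 + Real.exp δ * (M * B * δ + I)))
      (nhdsWithin 0 (Set.Ioi 0)) (nhds (g 0 + I)) := by
    have : Continuous (fun δ : ℝ => Real.exp δ * (g 0 + Real.exp δ * (M * B * δ + I))) := by
      continuity
    have h0 := this.tendsto 0
    simp only [Real.exp_zero, one_mul, mul_zero, zero_add] at h0
    exact h0.mono_left nhdsWithin_le_nhds
  have : ν T * g T ≤ g 0 + I :=
    ge_of_tendsto htend (eventually_nhdsWithin_of_forall (fun δ hδ => key δ hδ))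
  exact this

end GronwallAux

section Main
open Set Filter Topology


theorem lyapunov_stability_scalar
    (g γ α β μ : ℝ → ℝ) (p ε M₁ : ℝ) (hp : 1 < p) (hε : 0 < ε)
    (hγ : LocallyIntegrable γ) (hα : LocallyIntegrable α) (hβ : LocallyIntegrable β)
    (hαpos : ∀ t, 0 ≤ α t) (hβpos : ∀ t, 0 ≤ β t)
    (hg0 : ∀ t ≥ 0, 0 ≤ g t) (hgdiff : Differentiable ℝ g)
    (hineq : ∀ t ≥ 0, deriv g t ≤ γ t * g t + α t * g t ^ p + β t)
    (hμ : ∀ t, μ t = Real.exp (-∫ ξ in (0:ℝ)..t, (γ ξ + ε ^ (p - 1) * α ξ)))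
    (hM₁ : ∀ t ≥ 0, (∫ ξ in (0:ℝ)..t, γ ξ) + ε ^ (p - 1) * (∫ ξ in Set.Ioi (0:ℝ), α ξ) ≤ M₁)
    (hαint : IntegrableOn α (Set.Ioi (0:ℝ)))
    (hinit : g 0 * Real.exp M₁ < ε / 3)
    (hpert : ∀ t ≥ 0, (∫ ξ in (0:ℝ)..t, β ξ * μ ξ) / μ t < ε / 3) :
    ∀ t ≥ 0, g t ≤ ε := by
  intro t ht
  by_contra hgt
  push_neg at hgt
  have hgc : Continuous g := hgdiff.continuous
  have hq : (0:ℝ) < ε ^ (p - 1) := Real.rpow_pos_of_pos hε _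
  have hαII : (0:ℝ) ≤ ∫ ξ in Set.Ioi (0:ℝ), α ξ :=
    setIntegral_nonneg measurableSet_Ioi (fun x _ => hαpos x)
  have hM₁0 : 0 ≤ M₁ := by
    have h0 := hM₁ 0 le_rfl
    simp only [intervalIntegral.integral_same, zero_add] at h0
    nlinarith
  have hg00 : 0 ≤ g 0 := hg0 0 le_rfl
  have hg0ε : g 0 < ε / 3 := by
    nlinarith [Real.one_le_exp hM₁0]
  -- first crossing time
  set E : Set ℝ := Set.Icc 0 t ∩ {s | ε ≤ g s} with hE
  have hEclosed : IsClosed E := isClosed_Icc.inter (isClosed_le continuous_const hgc)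
  have hne : E.Nonempty := ⟨t, ⟨⟨ht, le_refl t⟩, hgt.le⟩⟩
  have hbdd : BddBelow E := ⟨0, fun x hx => hx.1.1⟩
  set T : ℝ := sInf E with hTdef
  have hTE : T ∈ E := hEclosed.csInf_mem hne hbdd
  have hT0 : 0 ≤ T := hTE.1.1
  have hTt : T ≤ t := hTE.1.2
  have hgTε : ε ≤ g T := hTE.2
  have hTpos : 0 < T := by
    rcases hT0.lt_or_eq with h | h
    · exact h
    · exfalso; rw [← h] at hgTε; linarith
  have hlt : ∀ s, 0 ≤ s → s < T → g s < ε := by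
    intro s hs0 hsT
    by_contra hge
    push_neg at hge
    have : T ≤ s := csInf_le hbdd ⟨⟨hs0, hsT.le.trans hTt⟩, hge⟩
    linarith
  have hTle : ∀ s ∈ Set.Icc (0:ℝ) T, g s ≤ ε := by
    intro s hs
    rcases hs.2.lt_or_eq with h | h
    · exact (hlt s hs.1 h).le
    · rw [h]
      by_contra hcε
      push_neg at hcε
      have hU : {x | ε < g x} ∈ nhds T := (isOpen_lt continuous_const hgc).mem_nhds hcε
      have hU' : {x | ε < g x} ∈ nhdsWithin T (Set.Iio T) := mem_nhdsWithin_of_mem_nhds hU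
      have hIoo : Set.Ioo 0 T ∈ nhdsWithin T (Set.Iio T) :=
        Ioo_mem_nhdsLT_of_mem ⟨hTpos, le_refl T⟩
      obtain ⟨s', hs'⟩ := Filter.nonempty_of_mem (Filter.inter_mem hU' hIoo)
      exact absurd (hlt s' hs'.2.1.le hs'.2.2) (not_lt.2 hs'.1.le)
  -- reduce the differential inequality
  have hcloc : LocallyIntegrable (fun ξ => γ ξ + ε ^ (p - 1) * α ξ) := by
    have h1 : LocallyIntegrable (fun ξ => ε ^ (p - 1) * α ξ) := by
      exact hα.smul (ε ^ (p - 1))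
    exact hγ.add h1
  have hineq' : ∀ x ∈ Set.Ioo (0:ℝ) T,
      deriv g x ≤ (γ x + ε ^ (p - 1) * α x) * g x + β x := by
    intro x hx
    have h1 := hineq x hx.1.le
    have hgx0 : 0 ≤ g x := hg0 x hx.1.le
    have hgxε : g x ≤ ε := hTle x ⟨hx.1.le, hx.2.le⟩
    have hpow : g x ^ p ≤ ε ^ (p - 1) * g x := by
      rcases hgx0.eq_or_lt with h0 | h0
      · rw [← h0, Real.zero_rpow (by positivity : p ≠ 0)]
        simp
      · have heq : g x ^ p = g x ^ (p - 1) * g x := by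
          conv_lhs => rw [show p = (p - 1) + 1 by ring]
          rw [Real.rpow_add h0, Real.rpow_one]
        rw [heq]
        exact mul_le_mul_of_nonneg_right
          (Real.rpow_le_rpow hgx0 hgxε (by linarith)) hgx0
    have h2 := mul_le_mul_of_nonneg_left hpow (hαpos x)
    nlinarith [h2]
  have main := gronwall_aux (fun ξ => γ ξ + ε ^ (p - 1) * α ξ) β g T hT0 hcloc hβ hβpos
    hgdiff hineq' (hg0 T hT0)
  have main' : μ T * g T ≤ g 0 + ∫ s in (0:ℝ)..T, β s * μ s := by
    simp only [hμ]
    simpa using main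
  have hμT : 0 < μ T := by rw [hμ]; exact Real.exp_pos _
  have h5 : g T ≤ g 0 / μ T + (∫ s in (0:ℝ)..T, β s * μ s) / μ T := by
    rw [← add_div, le_div_iff₀ hμT]
    nlinarith [main']
  have h6 : (∫ s in (0:ℝ)..T, β s * μ s) / μ T < ε / 3 := hpert T hT0
  -- bound g 0 / μ T
  have hγI : IntervalIntegrable γ volume 0 T :=
    (hγ.integrableOn_isCompact isCompact_uIcc).intervalIntegrable
  have hαI : IntervalIntegrable α volume 0 T :=
    (hα.integrableOn_isCompact isCompact_uIcc).intervalIntegrable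
  have hsplit : (∫ s in (0:ℝ)..T, (γ s + ε ^ (p - 1) * α s)) =
      (∫ s in (0:ℝ)..T, γ s) + ε ^ (p - 1) * ∫ s in (0:ℝ)..T, α s := by
    rw [intervalIntegral.integral_add hγI (hαI.const_mul _),
      intervalIntegral.integral_const_mul]
  have hαTle : (∫ s in (0:ℝ)..T, α s) ≤ ∫ ξ in Set.Ioi (0:ℝ), α ξ := by
    rw [intervalIntegral.integral_of_le hT0]
    exact setIntegral_mono_set hαint (Filter.Eventually.of_forall fun x => hαpos x)
      (HasSubset.Subset.eventuallyLE Set.Ioc_subset_Ioi_self)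
  have hCTM₁ : (∫ s in (0:ℝ)..T, (γ s + ε ^ (p - 1) * α s)) ≤ M₁ := by
    rw [hsplit]
    have h8 := mul_le_mul_of_nonneg_left hαTle hq.le
    have h9 := hM₁ T hT0
    linarith
  have h7 : g 0 / μ T ≤ g 0 * Real.exp M₁ := by
    rw [hμ, Real.exp_neg, div_inv_eq_mul]
    exact mul_le_mul_of_nonneg_left (Real.exp_le_exp.2 hCTM₁) hg00
  linarith

end Main
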